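/- With the hypotheses above, the function Θ : (0,1] → (0,1] is strictly increasing, continuously differentiable on (0,1], satisfies 0 < Θ(m) < m for all m ∈ (0,1], and lim_{m→0⁺} Θ(m) = 0. -/

import Mathlib

open Set Real Filter MeasureTheory intervalIntegral Topology

/-- The function `Θ : (0,1] → (0,1]` is strictly increasing,
continuously differentiable on `(0,1]`, satisfies `0 < Θ m < m` for all
`m ∈ (0,1]`, and `Θ m → 0` as `m → 0⁺`. -/
theorem theta_properties
    (V : ℝ → ℝ)
    (hV : ContDiffOn ℝ 1 V (Icc 0 1))
    (hVpos : ∀ m ∈ Ioc (0:ℝ) 1, 0 < V m)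
    (hV0 : V 0 = 0)
    (hdiv : ∀ m ∈ Ioc (0:ℝ) 1, ¬ MeasureTheory.IntegrableOn (fun s => 1 / V s) (Ioc 0 m))
    (τ : ℝ → ℝ)
    (hτcont : ContinuousOn τ (Icc 0 1))
    (hτpos : ∀ m ∈ Icc (0:ℝ) 1, 0 < τ m)
    (hτC1 : ContDiffOn ℝ 1 τ (Ioc 0 1))
    (hτ' : ∀ m ∈ Ioc (0:ℝ) 1, deriv τ m + 1 / V m > 0)
    (Θ : ℝ → ℝ)
    (hΘ : ∀ m ∈ Ioc (0:ℝ) 1, Θ m ∈ Ioo 0 m ∧ (∫ s in Ioc (Θ m) m, 1 / V s) = τ (Θ m)) :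
    StrictMonoOn Θ (Ioc 0 1) ∧
    ContDiffOn ℝ 1 Θ (Ioc 0 1) ∧
    (∀ m ∈ Ioc (0:ℝ) 1, 0 < Θ m ∧ Θ m < m) ∧
    Tendsto Θ (nhdsWithin 0 (Ioi 0)) (nhds 0) := by
  have hVc : ContinuousOn V (Icc 0 1) := hV.continuousOn
  have hfc : ContinuousOn (fun s => 1 / V s) (Ioc 0 1) :=
    continuousOn_const.div (hVc.mono Ioc_subset_Icc_self) (fun x hx => (hVpos x hx).ne')
  have hsub : ∀ {a b : ℝ}, 0 < a → b ≤ 1 → Icc a b ⊆ Ioc 0 1 :=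
    fun {a b} ha hb x hx => ⟨lt_of_lt_of_le ha hx.1, hx.2.trans hb⟩
  have hfInt : ∀ {a b : ℝ}, 0 < a → a ≤ b → b ≤ 1 →
      IntervalIntegrable (fun s => 1 / V s) volume a b := by
    intro a b ha hab hb
    apply ContinuousOn.intervalIntegrable
    rw [uIcc_of_le hab]
    exact hfc.mono (hsub ha hb)
  set J : ℝ → ℝ := fun x => ∫ s in x..(1:ℝ), 1 / V s with hJdef
  have hJsub : ∀ {a b : ℝ}, 0 < a → a ≤ b → b ≤ 1 →
      J a - J b = ∫ s in a..b, 1 / V s := by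
    intro a b ha hab hb
    have h := integral_add_adjacent_intervals (hfInt ha hab hb)
      (hfInt (lt_of_lt_of_le ha hab) hb le_rfl)
    simp only [hJdef]
    linarith
  set H : ℝ → ℝ := fun x => J x - τ x with hHdef
  have hΘmem : ∀ m ∈ Ioc (0:ℝ) 1, Θ m ∈ Ioc (0:ℝ) 1 := fun m hm =>
    ⟨(hΘ m hm).1.1, le_of_lt (lt_of_lt_of_le (hΘ m hm).1.2 hm.2)⟩
  have hkey : ∀ m ∈ Ioc (0:ℝ) 1, H (Θ m) = J m := by
    intro m hm
    have h1 := (hΘ m hm).2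
    have h2 : (∫ s in Ioc (Θ m) m, 1 / V s) = ∫ s in (Θ m)..m, 1 / V s :=
      (intervalIntegral.integral_of_le (le_of_lt (hΘ m hm).1.2)).symm
    have h3 := hJsub (hΘ m hm).1.1 (le_of_lt (hΘ m hm).1.2) hm.2
    simp only [hHdef]
    rw [h2] at h1
    linarith
  -- derivative of τ : facts
  have hdτc : ContinuousOn (derivWithin τ (Ioc 0 1)) (Ioc 0 1) :=
    hτC1.continuousOn_derivWithin (uniqueDiffOn_Ioc 0 1) le_rfl
  have hτdiff : ∀ x ∈ Ioo (0:ℝ) 1, HasDerivAt τ (deriv τ x) x := by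
    intro x hx
    have hmem : Ioc (0:ℝ) 1 ∈ 𝓝 x := Ioc_mem_nhds hx.1 hx.2
    exact ((hτC1.contDiffAt hmem).differentiableAt one_ne_zero).hasDerivAt
  have hτInt : ∀ {a b : ℝ}, 0 < a → a ≤ b → b ≤ 1 →
      IntervalIntegrable (deriv τ) volume a b := by
    intro a b ha hab hb
    rw [intervalIntegrable_iff_integrableOn_Ioo_of_le hab]
    have h1 : IntegrableOn (derivWithin τ (Ioc 0 1)) (Ioo a b) :=
      ((hdτc.mono (hsub ha hb)).integrableOn_compact isCompact_Icc).mono_set Ioo_subset_Icc_self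
    exact h1.congr_fun (fun x hx => derivWithin_of_mem_nhds
      (Ioc_mem_nhds (lt_of_lt_of_le ha hx.1.le) (lt_of_lt_of_le hx.2 hb))) measurableSet_Ioo
  have hτFTC : ∀ {a b : ℝ}, 0 < a → a ≤ b → b ≤ 1 →
      (∫ x in a..b, deriv τ x) = τ b - τ a := by
    intro a b ha hab hb
    exact integral_eq_sub_of_hasDeriv_right_of_le hab
      (hτcont.mono (Icc_subset_Icc ha.le hb))
      (fun x hx => (hτdiff x ⟨lt_trans ha hx.1, lt_of_lt_of_le hx.2 hb⟩).hasDerivWithinAt)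
      (hτInt ha hab hb)
  have hHanti : StrictAntiOn H (Ioc (0:ℝ) 1) := by
    intro a ha b hb hab
    have h1 := hJsub ha.1 hab.le hb.2
    have h2 := hτFTC ha.1 hab.le hb.2
    have h3 : (0:ℝ) < ∫ x in a..b, (deriv τ x + 1 / V x) :=
      intervalIntegral_pos_of_pos_on ((hτInt ha.1 hab.le hb.2).add (hfInt ha.1 hab.le hb.2))
        (fun x hx => hτ' x ⟨lt_trans ha.1 hx.1, (le_of_lt hx.2).trans hb.2⟩) hab
    rw [integral_add (hτInt ha.1 hab.le hb.2) (hfInt ha.1 hab.le hb.2)] at h3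
    simp only [hHdef]
    linarith
  have hJanti : StrictAntiOn J (Ioc (0:ℝ) 1) := by
    intro a ha b hb hab
    have h1 := hJsub ha.1 hab.le hb.2
    have h3 : (0:ℝ) < ∫ x in a..b, 1 / V x :=
      intervalIntegral_pos_of_pos_on (hfInt ha.1 hab.le hb.2)
        (fun x hx => div_pos one_pos
          (hVpos x ⟨lt_trans ha.1 hx.1, (le_of_lt hx.2).trans hb.2⟩)) hab
    linarith
  have hmono : StrictMonoOn Θ (Ioc (0:ℝ) 1) := by
    intro m₁ h₁ m₂ h₂ h12
    by_contra hle
    push_neg at hle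
    have hJlt : H (Θ m₂) < H (Θ m₁) := by
      rw [hkey m₁ h₁, hkey m₂ h₂]
      exact hJanti h₁ h₂ h12
    rcases eq_or_lt_of_le hle with he | hlt
    · rw [he] at hJlt; exact lt_irrefl _ hJlt
    · exact absurd (hHanti (hΘmem m₂ h₂) (hΘmem m₁ h₁) hlt) (not_lt.2 hJlt.le)
  -- the derivative formula
  have hfae : AEStronglyMeasurable (fun s => 1 / V s) (volume.restrict (Ioc (0:ℝ) 1)) :=
    hfc.aestronglyMeasurable measurableSet_Ioc
  set D : ℝ → ℝ := fun m => (1 / V m) / (1 / V (Θ m) + deriv τ (Θ m)) with hDdef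
  have key : ∀ m₀ ∈ Ioc (0:ℝ) 1, HasDerivWithinAt Θ (D m₀) (Ioc 0 1) m₀ := by
    intro m₀ hm₀
    obtain ⟨ha₀pos, ha₀lt⟩ := (hΘ m₀ hm₀).1
    have ha₀1 : Θ m₀ < 1 := lt_of_lt_of_le ha₀lt hm₀.2
    have hJd : HasDerivWithinAt J (-(1 / V m₀)) (Ioc 0 1) m₀ := by
      rw [hJdef]
      rcases lt_or_eq_of_le hm₀.2 with h1 | h1
      · have hmem : Ioc (0:ℝ) 1 ∈ 𝓝 m₀ := Ioc_mem_nhds hm₀.1 h1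
        exact ((integral_hasStrictDerivAt_left (hfInt hm₀.1 hm₀.2 le_rfl)
          ⟨Ioc 0 1, hmem, hfae⟩ (hfc.continuousAt hmem)).hasDerivAt).hasDerivWithinAt
      · subst h1
        have hmeas : StronglyMeasurableAtFilter (fun s => 1 / V s) (𝓝[Iic (1:ℝ)] 1) volume :=
          ⟨Ioc 0 1, Ioc_mem_nhdsLE_of_mem ⟨zero_lt_one, le_rfl⟩, hfae⟩
        have hcw : ContinuousWithinAt (fun s => 1 / V s) (Iic (1:ℝ)) 1 := by
          have h := hfc 1 ⟨zero_lt_one, le_rfl⟩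
          rwa [ContinuousWithinAt, nhdsWithin_Ioc_eq_nhdsLE zero_lt_one] at h
        exact (integral_hasDerivWithinAt_left (hfInt zero_lt_one le_rfl le_rfl)
          (s := Iic 1) (t := Iic 1) hmeas hcw).mono (fun x hx => hx.2)
    have hmema : Ioc (0:ℝ) 1 ∈ 𝓝 (Θ m₀) := Ioc_mem_nhds ha₀pos ha₀1
    have hJs : HasStrictDerivAt J (-(1 / V (Θ m₀))) (Θ m₀) := by
      rw [hJdef]
      exact integral_hasStrictDerivAt_left (hfInt ha₀pos ha₀1.le le_rfl)
        ⟨Ioc 0 1, hmema, hfae⟩ (hfc.continuousAt hmema)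
    have hτs : HasStrictDerivAt τ (deriv τ (Θ m₀)) (Θ m₀) :=
      (hτC1.contDiffAt hmema).hasStrictDerivAt one_ne_zero
    set c : ℝ := -(1 / V (Θ m₀)) - deriv τ (Θ m₀) with hcdef
    have hdpos : 0 < 1 / V (Θ m₀) + deriv τ (Θ m₀) := by
      have h := hτ' (Θ m₀) (hΘmem m₀ hm₀); linarith
    have hc : c ≠ 0 := by rw [hcdef]; intro h; linarith
    have hHs : HasStrictDerivAt H c (Θ m₀) := by
      rw [hHdef, hcdef]; exact hJs.sub hτs
    set g : ℝ → ℝ := hHs.localInverse H c (Θ m₀) hc with hgdef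
    have hgd : HasStrictDerivAt g c⁻¹ (H (Θ m₀)) := hHs.to_localInverse hc
    have hga : g (H (Θ m₀)) = Θ m₀ := (hHs.hasStrictFDerivAt_equiv hc).localInverse_apply_image
    have hgc : ContinuousAt g (H (Θ m₀)) := hgd.hasDerivAt.continuousAt
    have hJm₀ : J m₀ = H (Θ m₀) := (hkey m₀ hm₀).symm
    have hTend : Tendsto J (𝓝[Ioc (0:ℝ) 1] m₀) (𝓝 (H (Θ m₀))) := by
      rw [← hJm₀]; exact hJd.continuousWithinAt
    have ev1 : ∀ᶠ m in 𝓝[Ioc (0:ℝ) 1] m₀, H (g (J m)) = J m :=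
      hTend.eventually (hHs.hasStrictFDerivAt_equiv hc).eventually_right_inverse
    have ev2 : ∀ᶠ m in 𝓝[Ioc (0:ℝ) 1] m₀, g (J m) ∈ Ioo (0:ℝ) 1 := by
      have h := hgc.tendsto.comp hTend
      rw [hga] at h
      exact h.eventually_mem (isOpen_Ioo.mem_nhds ⟨ha₀pos, ha₀1⟩)
    have hev : Θ =ᶠ[𝓝[Ioc (0:ℝ) 1] m₀] fun m => g (J m) := by
      filter_upwards [ev1, ev2, self_mem_nhdsWithin] with m h1 h2 h3
      exact hHanti.injOn (hΘmem m h3) (Ioo_subset_Ioc_self h2) ((hkey m h3).trans h1.symm)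
    have hcomp : HasDerivWithinAt (fun m => g (J m)) (c⁻¹ * (-(1 / V m₀))) (Ioc (0:ℝ) 1) m₀ := by
      have hg' : HasDerivAt g c⁻¹ (J m₀) := by rw [hJm₀]; exact hgd.hasDerivAt
      exact hg'.comp_hasDerivWithinAt m₀ hJd
    have hΘm₀ : Θ m₀ = g (J m₀) := by rw [hJm₀, hga]
    have hder : HasDerivWithinAt Θ (c⁻¹ * (-(1 / V m₀))) (Ioc (0:ℝ) 1) m₀ :=
      hcomp.congr_of_eventuallyEq hev hΘm₀
    convert hder using 1
    simp only [hDdef, hcdef]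
    rw [show -(1 / V (Θ m₀)) - deriv τ (Θ m₀) = -(1 / V (Θ m₀) + deriv τ (Θ m₀)) by ring,
      inv_neg, div_eq_mul_inv]
    ring
  have hdiffOn : DifferentiableOn ℝ Θ (Ioc (0:ℝ) 1) :=
    fun m hm => (key m hm).differentiableWithinAt
  have hΘcont : ContinuousOn Θ (Ioc (0:ℝ) 1) := hdiffOn.continuousOn
  have hmaps : MapsTo Θ (Ioc (0:ℝ) 1) (Ioo (0:ℝ) 1) := fun m hm =>
    ⟨(hΘ m hm).1.1, lt_of_lt_of_le (hΘ m hm).1.2 hm.2⟩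
  have hdτIoo : ContinuousOn (deriv τ) (Ioo (0:ℝ) 1) :=
    (hτC1.mono Ioo_subset_Ioc_self).continuousOn_deriv_of_isOpen isOpen_Ioo le_rfl
  have hDcont : ContinuousOn D (Ioc (0:ℝ) 1) := by
    rw [hDdef]
    apply ContinuousOn.div hfc
    · exact (hfc.comp hΘcont (hmaps.mono_right Ioo_subset_Ioc_self)).add
        (hdτIoo.comp hΘcont hmaps)
    · intro m hm
      have h := hτ' (Θ m) (hΘmem m hm)
      intro h0; linarith
  have hCD : ContDiffOn ℝ 1 Θ (Ioc (0:ℝ) 1) := by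
    have h := (contDiffOn_succ_iff_derivWithin (n := 0) (uniqueDiffOn_Ioc (0:ℝ) 1)).2
      ⟨hdiffOn, by simp, contDiffOn_zero.2 (hDcont.congr
        (fun m hm => (key m hm).derivWithin ((uniqueDiffOn_Ioc (0:ℝ) 1) m hm)))⟩
    simpa using h
  refine ⟨hmono, hCD, fun m hm => ⟨(hΘ m hm).1.1, (hΘ m hm).1.2⟩, ?_⟩
  have hmem : Ioc (0:ℝ) 1 ∈ 𝓝[>] (0:ℝ) := Ioc_mem_nhdsGT_of_mem ⟨le_rfl, zero_lt_one⟩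
  apply tendsto_of_tendsto_of_tendsto_of_le_of_le' tendsto_const_nhds
    (tendsto_id.mono_right nhdsWithin_le_nhds)
  · filter_upwards [hmem] with m hm
    exact (hΘ m hm).1.1.le
  · filter_upwards [hmem] with m hm
    exact (hΘ m hm).1.2.le
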